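/- Let N ≥ 1 be an integer and 1 < p < 2. Suppose (q_n) is a sequence of reals with q_n > p and q_n → ∞, and for each n let v_n be a radial Neumann solution with exponent q_n satisfying the high-energy condition E_{q_n}(v_n) := ∫_0^1 r^{N−1}( v_n'(r)^p/p + v_n(r)^p/p − v_n(r)^{q_n}/q_n ) dr > (1/p − 1/q_n)·(1/N). Then E_{q_n}(v_n) → 1/(pN) as n → ∞. -/

import Mathlib

open Real Set Filter intervalIntegral

/-- `v : [0,1] → ℝ` is a radial Neumann solution with exponent `q` of
`-Δ_p v + v^{p-1} = v^{q-1}` in the unit ball of `ℝ^N`, in the cone of positive,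
radially nondecreasing functions; `v'` is its derivative on `[0,1]`. -/
def IsRadialNeumannSol (N : ℕ) (p q : ℝ) (v v' : ℝ → ℝ) : Prop :=
  (∀ r ∈ Set.Icc (0:ℝ) 1, HasDerivWithinAt v (v' r) (Set.Icc (0:ℝ) 1) r) ∧
  ContinuousOn v' (Set.Icc (0:ℝ) 1) ∧
  (∀ r ∈ Set.Icc (0:ℝ) 1, 0 < v r) ∧
  MonotoneOn v (Set.Icc (0:ℝ) 1) ∧
  (∀ r ∈ Set.Icc (0:ℝ) 1, 0 ≤ v' r) ∧
  v' 0 = 0 ∧ v' 1 = 0 ∧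
  (∀ r ∈ Set.Ioo (0:ℝ) 1,
    HasDerivAt (fun s => s ^ (N - 1) * v' s ^ (p - 1))
      (r ^ (N - 1) * (v r ^ (p - 1) - v r ^ (q - 1))) r)

namespace EAux

variable {N : ℕ} {p q : ℝ} {v v' : ℝ → ℝ}

lemma contv (hs : IsRadialNeumannSol N p q v v') : ContinuousOn v (Set.Icc 0 1) :=
  fun r hr => ((hs.1 r hr).continuousWithinAt)

/-- continuity of r^{N-1} * (v r)^c for c ≥ 0 -/
lemma contPow (hs : IsRadialNeumannSol N p q v v') {c : ℝ} (hc : 0 ≤ c) :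
    ContinuousOn (fun s => s ^ (N - 1) * v s ^ c) (Set.Icc 0 1) :=
  (continuousOn_pow _).mul ((contv hs).rpow_const (fun x _ => Or.inr hc))

lemma contPow' (hs : IsRadialNeumannSol N p q v v') {c : ℝ} (hc : 0 ≤ c) :
    ContinuousOn (fun s => s ^ (N - 1) * v' s ^ c) (Set.Icc 0 1) :=
  (continuousOn_pow _).mul (hs.2.1.rpow_const (fun x _ => Or.inr hc))

lemma W0 (hp1 : 1 < p) (hs : IsRadialNeumannSol N p q v v') :
    (0:ℝ) ^ (N - 1) * v' 0 ^ (p - 1) = 0 := by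
  rw [hs.2.2.2.2.2.1, Real.zero_rpow (by linarith), mul_zero]

lemma ftcW (hN : 1 ≤ N) (hp1 : 1 < p) (hpq : p < q) (hs : IsRadialNeumannSol N p q v v')
    {r : ℝ} (hr : r ∈ Set.Icc (0:ℝ) 1) :
    (∫ s in (0:ℝ)..r, s ^ (N - 1) * (v s ^ (p - 1) - v s ^ (q - 1)))
      = r ^ (N - 1) * v' r ^ (p - 1) := by
  have hsub : Set.Icc (0:ℝ) r ⊆ Set.Icc 0 1 := Set.Icc_subset_Icc le_rfl hr.2
  have hcont : ContinuousOn (fun s => s ^ (N - 1) * v' s ^ (p - 1)) (Set.Icc 0 r) :=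
    (contPow' hs (by linarith)).mono hsub
  have hint : IntervalIntegrable (fun s => s ^ (N - 1) * (v s ^ (p - 1) - v s ^ (q - 1)))
      MeasureTheory.volume 0 r := by
    apply ContinuousOn.intervalIntegrable
    rw [Set.uIcc_of_le hr.1]
    exact (((contPow hs (by linarith : (0:ℝ) ≤ p - 1)).sub
      (contPow hs (by linarith : (0:ℝ) ≤ q - 1))).mono hsub).congr (by
        intro x hx; simp [mul_sub])
  have := intervalIntegral.integral_eq_sub_of_hasDeriv_right_of_le hr.1 hcont
    (fun x hx => ((hs.2.2.2.2.2.2.2 x ⟨hx.1, lt_of_lt_of_le hx.2 hr.2⟩)).hasDerivWithinAt) hint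
  rw [this, W0 hp1 hs, sub_zero]

lemma intzero (hN : 1 ≤ N) (hp1 : 1 < p) (hpq : p < q) (hs : IsRadialNeumannSol N p q v v') :
    (∫ s in (0:ℝ)..1, s ^ (N - 1) * (v s ^ (p - 1) - v s ^ (q - 1))) = 0 := by
  rw [ftcW hN hp1 hpq hs (by norm_num : (1:ℝ) ∈ Set.Icc (0:ℝ) 1), hs.2.2.2.2.2.2.1,
    Real.zero_rpow (by linarith), mul_zero]

end EAux

namespace EAux2
open EAux
variable {N : ℕ} {p q : ℝ} {v v' : ℝ → ℝ}

lemma intv (hs : IsRadialNeumannSol N p q v v') {c : ℝ} (hc : 0 ≤ c) :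
    IntervalIntegrable (fun s => s ^ (N - 1) * v s ^ c) MeasureTheory.volume 0 1 := by
  apply ContinuousOn.intervalIntegrable
  rw [Set.uIcc_of_le zero_le_one]; exact contPow hs hc

lemma intv' (hs : IsRadialNeumannSol N p q v v') {c : ℝ} (hc : 0 ≤ c) :
    IntervalIntegrable (fun s => s ^ (N - 1) * v' s ^ c) MeasureTheory.volume 0 1 := by
  apply ContinuousOn.intervalIntegrable
  rw [Set.uIcc_of_le zero_le_one]; exact contPow' hs hc

lemma one_le_m (hN : 1 ≤ N) (hp1 : 1 < p) (hpq : p < q)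
    (hs : IsRadialNeumannSol N p q v v') : 1 ≤ v 1 := by
  by_contra hlt
  push_neg at hlt
  have hzero := intzero hN hp1 hpq hs
  have hpos : 0 < ∫ s in (0:ℝ)..1, s ^ (N - 1) * (v s ^ (p - 1) - v s ^ (q - 1)) := by
    apply intervalIntegral.intervalIntegral_pos_of_pos_on
    · have := (intv hs (by linarith : (0:ℝ) ≤ p - 1)).sub (intv hs (by linarith : (0:ℝ) ≤ q - 1))
      refine this.congr (fun x _ => by simp [mul_sub])
    · intro x hx
      have hxI : x ∈ Set.Icc (0:ℝ) 1 := ⟨hx.1.le, hx.2.le⟩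
      have h1 : 0 < v x := hs.2.2.1 x hxI
      have h2 : v x < 1 := lt_of_le_of_lt
        (hs.2.2.2.1 hxI (by norm_num : (1:ℝ) ∈ Set.Icc (0:ℝ) 1) hx.2.le) hlt
      have h3 : v x ^ (q-1) < v x ^ (p-1) :=
        Real.rpow_lt_rpow_of_exponent_gt h1 h2 (by linarith)
      have h4 : 0 < x ^ (N - 1) := pow_pos hx.1 _
      nlinarith
    · norm_num
  linarith

lemma nehari (hN : 1 ≤ N) (hp1 : 1 < p) (hpq : p < q)
    (hs : IsRadialNeumannSol N p q v v') :
    (∫ s in (0:ℝ)..1, s ^ (N - 1) * (v' s ^ p + v s ^ p - v s ^ q)) = 0 := by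
  set f : ℝ → ℝ := fun s => (s ^ (N - 1) * v' s ^ (p - 1)) * v s with hf
  have hfc : ContinuousOn f (Set.Icc 0 1) :=
    (contPow' hs (by linarith : (0:ℝ) ≤ p - 1)).mul (contv hs)
  have hderiv : ∀ x ∈ Set.Ioo (0:ℝ) 1,
      HasDerivAt f (x ^ (N - 1) * (v' x ^ p + v x ^ p - v x ^ q)) x := by
    intro x hx
    have hxI : x ∈ Set.Icc (0:ℝ) 1 := ⟨hx.1.le, hx.2.le⟩
    have hvd : HasDerivAt v (v' x) x :=
      (hs.1 x hxI).hasDerivAt (Icc_mem_nhds hx.1 hx.2)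
    have h := (hs.2.2.2.2.2.2.2 x hx).mul hvd
    have hvpos := (hs.2.2.1 x hxI).le
    have hv'nn := hs.2.2.2.2.1 x hxI
    have e1 : v x ^ p = v x ^ (p - 1) * v x := by
      nth_rewrite 1 [show p = (p - 1) + 1 by ring]
      rw [Real.rpow_add' hvpos (by intro h; linarith [h] ), Real.rpow_one]
    have e2 : v x ^ q = v x ^ (q - 1) * v x := by
      nth_rewrite 1 [show q = (q - 1) + 1 by ring]
      rw [Real.rpow_add' hvpos (by intro h; linarith [h]), Real.rpow_one]
    have e3 : v' x ^ p = v' x ^ (p - 1) * v' x := by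
      nth_rewrite 1 [show p = (p - 1) + 1 by ring]
      rw [Real.rpow_add' hv'nn (by intro h; linarith [h]), Real.rpow_one]
    exact h.congr_deriv (by rw [e1, e2, e3]; ring)
  have hint : IntervalIntegrable (fun s => s ^ (N - 1) * (v' s ^ p + v s ^ p - v s ^ q))
      MeasureTheory.volume 0 1 := by
    have := ((intv' hs (by linarith : (0:ℝ) ≤ p)).add (intv hs (by linarith : (0:ℝ) ≤ p))).sub
      (intv hs (by linarith : (0:ℝ) ≤ q))
    refine this.congr (fun x _ => by simp [mul_add, mul_sub])
  have := intervalIntegral.integral_eq_sub_of_hasDeriv_right_of_le zero_le_one hfc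
    (fun x hx => (hderiv x hx).hasDerivWithinAt) hint
  rw [this, hf]
  simp [hs.2.2.2.2.2.2.1, hs.2.2.2.2.2.1, Real.zero_rpow (show p - 1 ≠ 0 by intro h; linarith)]

lemma energy_eq (hN : 1 ≤ N) (hp1 : 1 < p) (hpq : p < q)
    (hs : IsRadialNeumannSol N p q v v') :
    (∫ r in (0:ℝ)..1, r ^ (N - 1) * (v' r ^ p / p + v r ^ p / p - v r ^ q / q))
      = (1 / p - 1 / q) * ∫ r in (0:ℝ)..1, r ^ (N - 1) * v r ^ q := by
  have hint1 : IntervalIntegrable (fun s => s ^ (N - 1) * (v' s ^ p + v s ^ p - v s ^ q))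
      MeasureTheory.volume 0 1 := by
    have := ((intv' hs (by linarith : (0:ℝ) ≤ p)).add (intv hs (by linarith : (0:ℝ) ≤ p))).sub
      (intv hs (by linarith : (0:ℝ) ≤ q))
    refine this.congr (fun x _ => by simp [mul_add, mul_sub])
  have hint2 := intv hs (by linarith : (0:ℝ) ≤ q)
  have key : ∀ r : ℝ, r ^ (N - 1) * (v' r ^ p / p + v r ^ p / p - v r ^ q / q)
      = (1 / p) * (r ^ (N - 1) * (v' r ^ p + v r ^ p - v r ^ q))
        + (1 / p - 1 / q) * (r ^ (N - 1) * v r ^ q) := by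
    intro r; ring
  simp_rw [key]
  rw [intervalIntegral.integral_add (hint1.const_mul _) (hint2.const_mul _),
    intervalIntegral.integral_const_mul, intervalIntegral.integral_const_mul,
    nehari hN hp1 hpq hs, mul_zero, zero_add]

end EAux2

namespace EAux3
open EAux EAux2
variable {N : ℕ} {p q : ℝ} {v v' : ℝ → ℝ}

lemma int_monomial (hN : 1 ≤ N) (c : ℝ) (r : ℝ) :
    ∫ s in (0:ℝ)..r, s ^ (N - 1) * c = c * r ^ N / N := by
  rw [intervalIntegral.integral_mul_const, integral_pow, Nat.sub_add_cancel hN,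
    Nat.cast_sub hN]
  push_cast
  ring_nf
  rw [zero_pow (by omega : N ≠ 0)]
  ring

lemma int_qp_eq (hN : 1 ≤ N) (hp1 : 1 < p) (hpq : p < q)
    (hs : IsRadialNeumannSol N p q v v') :
    (∫ r in (0:ℝ)..1, r ^ (N - 1) * v r ^ (q - 1))
      = ∫ r in (0:ℝ)..1, r ^ (N - 1) * v r ^ (p - 1) := by
  have h := intzero hN hp1 hpq hs
  simp_rw [mul_sub] at h
  rw [intervalIntegral.integral_sub (intv hs (by linarith : (0:ℝ) ≤ p - 1))
    (intv hs (by linarith : (0:ℝ) ≤ q - 1))] at h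
  linarith

lemma int_pm1_le (hN : 1 ≤ N) (hp1 : 1 < p) (hpq : p < q)
    (hs : IsRadialNeumannSol N p q v v') :
    (∫ r in (0:ℝ)..1, r ^ (N - 1) * v r ^ (p - 1)) ≤ v 1 ^ (p - 1) / N := by
  have h := intervalIntegral.integral_mono_on zero_le_one
    (intv hs (by linarith : (0:ℝ) ≤ p - 1))
    (((continuous_pow (N-1)).mul continuous_const).intervalIntegrable 0 1)
    (fun x hx => by
      have h1 : v x ≤ v 1 := hs.2.2.2.1 hx (by norm_num) hx.2
      have h2 : 0 ≤ v x := (hs.2.2.1 x hx).le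
      exact mul_le_mul_of_nonneg_left (Real.rpow_le_rpow h2 h1 (by linarith))
        (pow_nonneg hx.1 _))
  simp only [Pi.mul_apply] at h
  rw [int_monomial hN _ 1] at h
  simpa using h

lemma A_le (hN : 1 ≤ N) (hp1 : 1 < p) (hpq : p < q)
    (hs : IsRadialNeumannSol N p q v v') :
    (∫ r in (0:ℝ)..1, r ^ (N - 1) * v r ^ q) ≤ v 1 ^ p / N := by
  have hm0 : 0 < v 1 := hs.2.2.1 1 (by norm_num)
  have step1 : (∫ r in (0:ℝ)..1, r ^ (N - 1) * v r ^ q)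
      ≤ (∫ r in (0:ℝ)..1, r ^ (N - 1) * v r ^ (q - 1)) * v 1 := by
    rw [← intervalIntegral.integral_mul_const]
    apply intervalIntegral.integral_mono_on zero_le_one (intv hs (by linarith))
      ((intv hs (by linarith : (0:ℝ) ≤ q - 1)).mul_const _)
    intro x hx
    have h1 : v x ≤ v 1 := hs.2.2.2.1 hx (by norm_num) hx.2
    have h2 : 0 < v x := hs.2.2.1 x hx
    have e2 : v x ^ q = v x ^ (q - 1) * v x := by
      nth_rewrite 1 [show q = (q - 1) + 1 by ring]
      rw [Real.rpow_add' h2.le (by intro h; linarith [h]), Real.rpow_one]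
    rw [e2]
    have h3 : (0:ℝ) ≤ x ^ (N - 1) := pow_nonneg hx.1 _
    have h4 : (0:ℝ) ≤ v x ^ (q - 1) := Real.rpow_nonneg h2.le _
    nlinarith [mul_nonneg (mul_nonneg h3 h4) (sub_nonneg.2 h1)]
  have step2 := int_qp_eq hN hp1 hpq hs
  have step3 := int_pm1_le hN hp1 hpq hs
  have e1 : v 1 ^ p = v 1 ^ (p - 1) * v 1 := by
    nth_rewrite 1 [show p = (p - 1) + 1 by ring]
    rw [Real.rpow_add' hm0.le (by intro h; linarith [h]), Real.rpow_one]
  calc (∫ r in (0:ℝ)..1, r ^ (N - 1) * v r ^ q)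
      ≤ (∫ r in (0:ℝ)..1, r ^ (N - 1) * v r ^ (q - 1)) * v 1 := step1
    _ = (∫ r in (0:ℝ)..1, r ^ (N - 1) * v r ^ (p - 1)) * v 1 := by rw [step2]
    _ ≤ (v 1 ^ (p - 1) / N) * v 1 :=
        mul_le_mul_of_nonneg_right step3 hm0.le
    _ = v 1 ^ p / N := by rw [e1]; ring

lemma v'_le (hN : 1 ≤ N) (hp1 : 1 < p) (hpq : p < q)
    (hs : IsRadialNeumannSol N p q v v') :
    ∀ r ∈ Set.Icc (0:ℝ) 1, v' r ≤ v 1 := by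
  intro r hr
  have hm0 : 0 < v 1 := hs.2.2.1 1 (by norm_num)
  rcases eq_or_lt_of_le hr.1 with h0 | h0
  · rw [← h0, hs.2.2.2.2.2.1]; exact hm0.le
  · have key := ftcW hN hp1 hpq hs hr
    have hsub : Set.Icc (0:ℝ) r ⊆ Set.Icc 0 1 := Set.Icc_subset_Icc le_rfl hr.2
    have hub : (∫ s in (0:ℝ)..r, s ^ (N - 1) * (v s ^ (p - 1) - v s ^ (q - 1)))
        ≤ ∫ s in (0:ℝ)..r, s ^ (N - 1) * (v 1 ^ (p - 1)) := by
      apply intervalIntegral.integral_mono_on hr.1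
      · apply ContinuousOn.intervalIntegrable
        rw [Set.uIcc_of_le hr.1]
        exact (((contPow hs (by linarith : (0:ℝ) ≤ p - 1)).sub
          (contPow hs (by linarith : (0:ℝ) ≤ q - 1))).mono hsub).congr
            (fun x _ => by simp [mul_sub])
      · exact ((continuous_pow (N-1)).mul continuous_const).intervalIntegrable 0 r
      · intro x hx
        have hxI : x ∈ Set.Icc (0:ℝ) 1 := hsub hx
        have h1 : v x ≤ v 1 := hs.2.2.2.1 hxI (by norm_num) hxI.2
        have h2 : 0 < v x := hs.2.2.1 x hxI
        have h3 : v x ^ (p - 1) ≤ v 1 ^ (p - 1) :=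
          Real.rpow_le_rpow h2.le h1 (by linarith)
        have h4 : (0:ℝ) ≤ v x ^ (q - 1) := Real.rpow_nonneg h2.le _
        have h5 : (0:ℝ) ≤ x ^ (N - 1) := pow_nonneg hx.1 _
        nlinarith
    rw [int_monomial hN _ r] at hub
    have hrN : v 1 ^ (p - 1) * r ^ N / N ≤ v 1 ^ (p - 1) * r ^ (N - 1) := by
      have hN1 : (1:ℝ) ≤ N := by exact_mod_cast hN
      have h6 : r ^ N ≤ r ^ (N - 1) := by
        have : r ^ N = r ^ (N - 1) * r := by
          rw [← pow_succ, Nat.sub_add_cancel hN]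
        rw [this]
        nlinarith [pow_nonneg h0.le (N - 1), hr.2]
      have h7 : (0:ℝ) ≤ v 1 ^ (p - 1) := Real.rpow_nonneg hm0.le _
      rw [div_le_iff₀ (by linarith : (0:ℝ) < (N:ℝ))]
      nlinarith [mul_le_mul_of_nonneg_left h6 h7, mul_nonneg h7 (pow_nonneg h0.le (N-1))]
    rw [key] at hub
    have h8 : v' r ^ (p - 1) ≤ v 1 ^ (p - 1) := by
      have hrpos : (0:ℝ) < r ^ (N - 1) := pow_pos h0 _
      have htr := le_trans hub hrN
      rw [mul_comm (v 1 ^ (p - 1))] at htr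
      exact (mul_le_mul_iff_right₀ hrpos).mp htr
    by_contra hlt
    push_neg at hlt
    have := Real.rpow_lt_rpow hm0.le hlt (by linarith : (0:ℝ) < p - 1)
    linarith

lemma lip (hN : 1 ≤ N) (hp1 : 1 < p) (hpq : p < q)
    (hs : IsRadialNeumannSol N p q v v') {r : ℝ} (hr : r ∈ Set.Icc (0:ℝ) 1) :
    v 1 - v r ≤ v 1 * (1 - r) := by
  have hfc : ContinuousOn v (Set.Icc r 1) := (contv hs).mono (Set.Icc_subset_Icc hr.1 le_rfl)
  have hint : IntervalIntegrable v' MeasureTheory.volume r 1 := by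
    apply ContinuousOn.intervalIntegrable
    rw [Set.uIcc_of_le hr.2]
    exact hs.2.1.mono (Set.Icc_subset_Icc hr.1 le_rfl)
  have hftc := intervalIntegral.integral_eq_sub_of_hasDeriv_right_of_le hr.2 hfc
    (fun x hx => by
      have hxI : x ∈ Set.Icc (0:ℝ) 1 := ⟨le_trans hr.1 hx.1.le, hx.2.le⟩
      exact ((hs.1 x hxI).hasDerivAt
        (Icc_mem_nhds (lt_of_le_of_lt hr.1 hx.1) hx.2)).hasDerivWithinAt) hint
  have hmono2 : (∫ x in r..1, v' x) ≤ ∫ _ in r..1, v 1 :=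
    intervalIntegral.integral_mono_on hr.2 hint intervalIntegrable_const
      (fun x hx => v'_le hN hp1 hpq hs x ⟨le_trans hr.1 hx.1, hx.2⟩)
  rw [intervalIntegral.integral_const, hftc] at hmono2
  simpa [smul_eq_mul, mul_comm] using hmono2

end EAux3

namespace EAux4
open EAux EAux2 EAux3
variable {N : ℕ} {p q : ℝ} {v v' : ℝ → ℝ}

lemma qbound (hN : 1 ≤ N) (hp1 : 1 < p) (hpq : p < q)
    (hs : IsRadialNeumannSol N p q v v') {ε : ℝ} (hε : 0 < ε) (hgt : 1 + ε ≤ v 1) :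
    (ε / (2 * (1 + ε))) * ((1:ℝ)/2) ^ (N - 1) * (1 + ε/2) ^ (q - p)
      ≤ (2:ℝ) ^ (p - 1) := by
  set m := v 1 with hm
  have hm0 : 0 < m := hs.2.2.1 1 (by norm_num)
  set δ : ℝ := ε / (2 * (1 + ε)) with hδdef
  have hδpos : 0 < δ := by positivity
  have hδhalf : δ ≤ 1/2 := by
    rw [hδdef, div_le_div_iff₀ (by positivity) (by norm_num)]
    nlinarith
  have h2mδ : 2 * m * δ ≤ m - 1 := by
    rw [hδdef]
    rw [show 2 * m * (ε / (2 * (1 + ε))) = (2 * m * ε) / (2 * (1 + ε)) by ring,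
      div_le_iff₀ (by positivity)]
    nlinarith
  have hrange : ∀ r ∈ Set.Icc (1 - δ) 1, (m + 1)/2 ≤ v r := by
    intro r hr
    have hrI : r ∈ Set.Icc (0:ℝ) 1 := ⟨by linarith [hr.1], hr.2⟩
    have hl := lip hN hp1 hpq hs hrI
    have h1r : 1 - r ≤ δ := by linarith [hr.1]
    nlinarith
  have hqm1 : (0:ℝ) ≤ q - 1 := by linarith
  have hintsub : IntervalIntegrable (fun s => s ^ (N-1) * v s ^ (q-1))
      MeasureTheory.volume (1 - δ) 1 := by
    apply (intv hs hqm1).mono_set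
    apply Set.uIcc_subset_uIcc <;> rw [Set.uIcc_of_le zero_le_one]
    · exact ⟨by linarith, by linarith⟩
    · exact ⟨zero_le_one, le_rfl⟩
  have hpt : ∀ x ∈ Set.Icc (1 - δ) 1,
      ((1:ℝ)/2) ^ (N-1) * ((m+1)/2) ^ (q-1) ≤ x ^ (N-1) * v x ^ (q-1) := by
    intro x hx
    have hx0 : (1:ℝ)/2 ≤ x := by linarith [hx.1]
    have h1 : ((1:ℝ)/2) ^ (N-1) ≤ x ^ (N-1) := pow_le_pow_left₀ (by norm_num) hx0 _
    have h2 : ((m+1)/2) ^ (q-1) ≤ v x ^ (q-1) :=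
      Real.rpow_le_rpow (by positivity) (hrange x hx) hqm1
    exact mul_le_mul h1 h2 (Real.rpow_nonneg (by positivity) _) (pow_nonneg (by linarith) _)
  have hlb : δ * (((1:ℝ)/2) ^ (N-1) * ((m+1)/2) ^ (q-1))
      ≤ ∫ r in (1-δ)..1, r ^ (N-1) * v r ^ (q-1) := by
    have h := intervalIntegral.integral_mono_on (by linarith : 1 - δ ≤ 1)
      intervalIntegrable_const hintsub hpt
    rw [intervalIntegral.integral_const] at h
    calc δ * (((1:ℝ)/2) ^ (N-1) * ((m+1)/2) ^ (q-1))
        = (1 - (1 - δ)) • (((1:ℝ)/2) ^ (N-1) * ((m+1)/2) ^ (q-1)) := by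
          rw [smul_eq_mul]; ring
      _ ≤ _ := h
  have hup2 : (∫ r in (1-δ)..1, r ^ (N-1) * v r ^ (q-1)) ≤ m ^ (p-1) := by
    have hint0 : IntervalIntegrable (fun s => s ^ (N-1) * v s ^ (q-1))
        MeasureTheory.volume 0 (1 - δ) := by
      apply (intv hs hqm1).mono_set
      apply Set.uIcc_subset_uIcc <;> rw [Set.uIcc_of_le zero_le_one]
      · exact ⟨le_rfl, zero_le_one⟩
      · exact ⟨by linarith, by linarith⟩
    have hsplit := intervalIntegral.integral_add_adjacent_intervals hint0 hintsub
    have hnn : 0 ≤ ∫ r in (0:ℝ)..(1-δ), r ^ (N-1) * v r ^ (q-1) := by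
      apply intervalIntegral.integral_nonneg (by linarith)
      intro x hx
      exact mul_nonneg (pow_nonneg hx.1 _)
        (Real.rpow_nonneg (hs.2.2.1 x ⟨hx.1, by linarith [hx.2]⟩).le _)
    have heq := int_qp_eq hN hp1 hpq hs
    have h3 := int_pm1_le hN hp1 hpq hs
    have hNc : (1:ℝ) ≤ N := by exact_mod_cast hN
    have h4 : m ^ (p-1) / N ≤ m ^ (p-1) :=
      div_le_self (Real.rpow_nonneg hm0.le _) hNc
    linarith
  have hX : (0:ℝ) < ((m+1)/2) ^ (p-1) := Real.rpow_pos_of_pos (by linarith) _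
  have hsplitpow : ((m+1)/2) ^ (q-1) = ((m+1)/2) ^ (q-p) * ((m+1)/2) ^ (p-1) := by
    rw [← Real.rpow_add (by linarith : (0:ℝ) < (m+1)/2)]
    ring_nf
  have hm2 : m ^ (p-1) ≤ (2:ℝ) ^ (p-1) * ((m+1)/2) ^ (p-1) := by
    rw [← Real.mul_rpow (by norm_num : (0:ℝ) ≤ 2) (by positivity)]
    rw [show (2:ℝ) * ((m+1)/2) = m + 1 by ring]
    exact Real.rpow_le_rpow hm0.le (by linarith) (by linarith)
  have hmain : δ * ((1:ℝ)/2) ^ (N-1) * ((m+1)/2) ^ (q-p) * ((m+1)/2) ^ (p-1)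
      ≤ (2:ℝ) ^ (p-1) * ((m+1)/2) ^ (p-1) := by
    calc δ * ((1:ℝ)/2) ^ (N-1) * ((m+1)/2) ^ (q-p) * ((m+1)/2) ^ (p-1)
        = δ * (((1:ℝ)/2) ^ (N-1) * ((m+1)/2) ^ (q-1)) := by rw [hsplitpow]; ring
      _ ≤ ∫ r in (1-δ)..1, r ^ (N-1) * v r ^ (q-1) := hlb
      _ ≤ m ^ (p-1) := hup2
      _ ≤ (2:ℝ) ^ (p-1) * ((m+1)/2) ^ (p-1) := hm2
  have hfinal : δ * ((1:ℝ)/2) ^ (N-1) * ((m+1)/2) ^ (q-p) ≤ (2:ℝ) ^ (p-1) :=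
    le_of_mul_le_mul_right hmain hX
  have hbase : (1:ℝ) + ε/2 ≤ (m+1)/2 := by linarith
  have hpow : (1 + ε/2) ^ (q-p) ≤ ((m+1)/2) ^ (q-p) :=
    Real.rpow_le_rpow (by positivity) hbase (by linarith)
  calc δ * ((1:ℝ)/2) ^ (N-1) * (1 + ε/2) ^ (q-p)
      ≤ δ * ((1:ℝ)/2) ^ (N-1) * ((m+1)/2) ^ (q-p) :=
        mul_le_mul_of_nonneg_left hpow (by positivity)
    _ ≤ (2:ℝ) ^ (p-1) := hfinal

end EAux4

open EAux EAux2 EAux3 EAux4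

/-- Convergence of the energy levels of the high-energy solutions:
`E_{q_n}(v_n) → 1/(pN)` as `q_n → ∞`. -/
theorem energy_levels_tendsto
    (N : ℕ) (hN : 1 ≤ N) (p : ℝ) (hp1 : 1 < p) (hp2 : p < 2)
    (q : ℕ → ℝ) (hq : ∀ n, p < q n) (hqtop : Tendsto q atTop atTop)
    (v v' : ℕ → ℝ → ℝ)
    (hsol : ∀ n, IsRadialNeumannSol N p (q n) (v n) (v' n))
    (hE : ∀ n, (1 / p - 1 / q n) * (1 / (N : ℝ)) <
      ∫ r in (0:ℝ)..1, r ^ (N - 1) *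
        (v' n r ^ p / p + v n r ^ p / p - v n r ^ q n / q n)) :
    Tendsto (fun n => ∫ r in (0:ℝ)..1, r ^ (N - 1) *
        (v' n r ^ p / p + v n r ^ p / p - v n r ^ q n / q n))
      atTop (nhds (1 / (p * (N : ℝ)))) := by
  have hNc : (1:ℝ) ≤ N := by exact_mod_cast hN
  set m : ℕ → ℝ := fun n => v n 1 with hmdef
  have hm1 : ∀ n, 1 ≤ m n := fun n => one_le_m hN hp1 (hq n) (hsol n)
  -- m → 1
  have hmlim : Tendsto m atTop (nhds 1) := by
    rw [tendsto_order]
    constructor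
    · intro a ha
      exact Eventually.of_forall fun n => lt_of_lt_of_le ha (hm1 n)
    · intro a ha
      set ε : ℝ := a - 1 with hεdef
      have hε : 0 < ε := by linarith
      set C : ℝ := (ε / (2 * (1 + ε))) * ((1:ℝ)/2) ^ (N - 1) with hCdef
      have hCpos : 0 < C := by positivity
      have hblog : 0 < Real.log (1 + ε/2) := Real.log_pos (by linarith)
      have hgrow : Tendsto (fun n => C * (1 + ε/2) ^ (q n - p)) atTop atTop := by
        have h1 : Tendsto (fun n => q n - p) atTop atTop :=
          tendsto_atTop_add_const_right atTop (-p) hqtop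
        have h2 : Tendsto (fun n => (q n - p) * Real.log (1 + ε/2)) atTop atTop :=
          h1.atTop_mul_const hblog
        have h3 : Tendsto (fun n => Real.exp ((q n - p) * Real.log (1 + ε/2)))
            atTop atTop := Real.tendsto_exp_atTop.comp h2
        have h4 : ∀ n, (1 + ε/2) ^ (q n - p)
            = Real.exp ((q n - p) * Real.log (1 + ε/2)) := fun n => by
          rw [Real.rpow_def_of_pos (by linarith : (0:ℝ) < 1 + ε/2), mul_comm]
        simp_rw [h4]
        exact h3.const_mul_atTop hCpos
      filter_upwards [hgrow.eventually_gt_atTop ((2:ℝ) ^ (p - 1))] with n hn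
      by_contra hc
      push_neg at hc
      have hge : 1 + ε ≤ m n := by rw [hεdef]; linarith
      have := qbound hN hp1 (hq n) (hsol n) hε hge
      rw [hCdef] at hn
      linarith [this, hn]
  -- energy identity and bounds
  have hEeq : ∀ n, (∫ r in (0:ℝ)..1, r ^ (N - 1) *
      (v' n r ^ p / p + v n r ^ p / p - v n r ^ q n / q n))
      = (1 / p - 1 / q n) * ∫ r in (0:ℝ)..1, r ^ (N - 1) * v n r ^ q n :=
    fun n => energy_eq hN hp1 (hq n) (hsol n)
  have hfac : ∀ n, (0:ℝ) ≤ 1 / p - 1 / q n := by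
    intro n
    have h1 : 0 < p := by linarith
    have h2 : 0 < q n := lt_trans h1 (hq n)
    have := one_div_le_one_div_of_le h1 (hq n).le
    linarith
  have hEup : ∀ n, (∫ r in (0:ℝ)..1, r ^ (N - 1) *
      (v' n r ^ p / p + v n r ^ p / p - v n r ^ q n / q n))
      ≤ (1 / p - 1 / q n) * (m n ^ p / N) := by
    intro n
    rw [hEeq n]
    exact mul_le_mul_of_nonneg_left (A_le hN hp1 (hq n) (hsol n)) (hfac n)
  have hq0 : Tendsto (fun n => 1 / q n) atTop (nhds 0) := by
    simp only [one_div]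
    exact hqtop.inv_tendsto_atTop
  have hmp : Tendsto (fun n => m n ^ p) atTop (nhds 1) := by
    have hc : ContinuousAt (fun x : ℝ => x ^ p) 1 :=
      Real.continuousAt_rpow_const 1 p (Or.inl one_ne_zero)
    have := hc.tendsto.comp hmlim
    rwa [Real.one_rpow] at this
  have hlowlim : Tendsto (fun n => (1 / p - 1 / q n) * (1 / (N:ℝ))) atTop
      (nhds (1 / (p * (N:ℝ)))) := by
    have h5 : Tendsto (fun n => (1 / p - 1 / q n) * (1 / (N:ℝ))) atTop
        (nhds ((1 / p - 0) * (1 / (N:ℝ)))) :=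
      ((tendsto_const_nhds (x := 1 / p)).sub hq0).mul tendsto_const_nhds
    have heq : (1 / p - 0) * (1 / (N:ℝ)) = 1 / (p * (N:ℝ)) := by
      rw [sub_zero, div_mul_div_comm, one_mul]
    rwa [heq] at h5
  have huplim : Tendsto (fun n => (1 / p - 1 / q n) * (m n ^ p / N)) atTop
      (nhds (1 / (p * (N:ℝ)))) := by
    have h5 : Tendsto (fun n => (1 / p - 1 / q n) * (m n ^ p / (N:ℝ))) atTop
        (nhds ((1 / p - 0) * ((1:ℝ) / (N:ℝ)))) :=
      ((tendsto_const_nhds (x := 1 / p)).sub hq0).mul (hmp.div_const (N:ℝ))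
    have heq : (1 / p - 0) * ((1:ℝ) / (N:ℝ)) = 1 / (p * (N:ℝ)) := by
      rw [sub_zero, div_mul_div_comm, one_mul]
    rwa [heq] at h5
  exact tendsto_of_tendsto_of_tendsto_of_le_of_le' hlowlim huplim
    (Eventually.of_forall fun n => (hE n).le) (Eventually.of_forall hEup)
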